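/- Let (X, Y) be a bivariate Gaussian vector with means a, variances τ², and correlation ρ ∈ (−1, 1). Then for any u ∈ ℝ, cov(1{X ≥ u}, 1{Y ≥ u}) = (1/(2π)) ∫_0^ρ (1 − s²)^{−1/2} exp(−(u−a)²/(τ²(1+s))) ds. -/

import Mathlib

open MeasureTheory ProbabilityTheory Set Filter

open Metric

section PlackettAux

noncomputable def gphi (x : ℝ) : ℝ := (Real.sqrt (2 * Real.pi))⁻¹ * Real.exp (-x ^ 2 / 2)

lemma gphi_eq (x : ℝ) : gaussianPDFReal 0 1 x = gphi x := by
  simp [gaussianPDFReal, gphi]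

lemma gphi_nonneg (x : ℝ) : 0 ≤ gphi x := by
  unfold gphi; positivity

lemma gphi_pos (x : ℝ) : 0 < gphi x := by
  unfold gphi
  have := Real.pi_pos
  positivity

lemma gphi_le (x : ℝ) : gphi x ≤ (Real.sqrt (2 * Real.pi))⁻¹ := by
  have h1 : Real.exp (-x ^ 2 / 2) ≤ 1 := by
    rw [Real.exp_le_one_iff]; nlinarith [sq_nonneg x]
  calc gphi x ≤ (Real.sqrt (2 * Real.pi))⁻¹ * 1 :=
        mul_le_mul_of_nonneg_left h1 (by positivity)
    _ = _ := mul_one _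

lemma continuous_gphi : Continuous gphi := by
  unfold gphi; fun_prop

lemma integrable_gphi : Integrable gphi := by
  have h := integrable_gaussianPDFReal 0 1
  rwa [funext gphi_eq] at h

lemma integral_gphi : ∫ x, gphi x = 1 := by
  have h := integral_gaussianPDFReal_eq_one 0 (one_ne_zero)
  rwa [funext gphi_eq] at h

noncomputable def Qt (t : ℝ) : ℝ := ∫ x in Ioi t, gphi x

lemma Qt_nonneg (t : ℝ) : 0 ≤ Qt t :=
  setIntegral_nonneg measurableSet_Ioi fun x _ => gphi_nonneg x

lemma Qt_le_one (t : ℝ) : Qt t ≤ 1 := by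
  rw [← integral_gphi]
  exact setIntegral_le_integral integrable_gphi (Filter.Eventually.of_forall gphi_nonneg)

lemma Qt_eq (t : ℝ) : Qt t = Qt 0 - ∫ x in (0:ℝ)..t, gphi x := by
  have h : ∀ s : ℝ, (∫ x in Iic s, gphi x) + Qt s = 1 := fun s => by
    rw [Qt, intervalIntegral.integral_Iic_add_Ioi integrable_gphi.integrableOn integrable_gphi.integrableOn,
      integral_gphi]
  have h2 := intervalIntegral.integral_Iic_sub_Iic (μ := volume) (f := gphi)
    integrable_gphi.integrableOn integrable_gphi.integrableOn (a := 0) (b := t)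
  have h3 := h t; have h4 := h 0
  linarith

lemma hasDerivAt_Qt (t : ℝ) : HasDerivAt Qt (-(gphi t)) t := by
  have h : HasDerivAt (fun s => ∫ x in (0:ℝ)..s, gphi x) (gphi t) t :=
    intervalIntegral.integral_hasDerivAt_right
      (integrable_gphi.intervalIntegrable)
      (continuous_gphi.stronglyMeasurableAtFilter _ _)
      continuous_gphi.continuousAt
  have h2 := (h.const_sub (Qt 0))
  refine (h2.congr_of_eventuallyEq ?_).congr_deriv (by ring)
  exact Filter.Eventually.of_forall fun s => (Qt_eq s)

lemma continuous_Qt : Continuous Qt :=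
  continuous_iff_continuousAt.2 fun t => (hasDerivAt_Qt t).continuousAt
noncomputable def thf (v r x : ℝ) : ℝ := (v - r * x) / Real.sqrt (1 - r ^ 2)
noncomputable def gint (v r x : ℝ) : ℝ := gphi x * Qt (thf v r x)
noncomputable def gint' (v r x : ℝ) : ℝ :=
  gphi x * gphi (thf v r x) * ((x - r * v) / Real.sqrt (1 - r ^ 2) ^ 3)

lemma hasDerivAt_thf {v r : ℝ} (hr : r ∈ Set.Ioo (-1:ℝ) 1) (x : ℝ) :
    HasDerivAt (fun r => thf v r x) ((r * v - x) / Real.sqrt (1 - r ^ 2) ^ 3) r := by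
  obtain ⟨hr1, hr2⟩ := hr
  have h1r : (0:ℝ) < 1 - r ^ 2 := by nlinarith
  have hc : 0 < Real.sqrt (1 - r ^ 2) := Real.sqrt_pos.2 h1r
  have hc2 : Real.sqrt (1 - r ^ 2) ^ 2 = 1 - r ^ 2 := Real.sq_sqrt h1r.le
  have hu : HasDerivAt (fun r : ℝ => 1 - r ^ 2) (-(2 * r ^ 1)) r :=
    (hasDerivAt_pow 2 r).const_sub 1
  have hd : HasDerivAt (fun r : ℝ => Real.sqrt (1 - r ^ 2))
      (1 / (2 * Real.sqrt (1 - r ^ 2)) * (-(2 * r ^ 1))) r :=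
    (Real.hasDerivAt_sqrt h1r.ne').comp r hu
  have hn : HasDerivAt (fun r : ℝ => v - r * x) (-x) r := by
    simpa using ((hasDerivAt_id r).mul_const x).const_sub v
  have := hn.div hd hc.ne'
  refine this.congr_deriv ?_
  field_simp
  linear_combination (-x) * hc2

lemma hasDerivAt_gint {v r : ℝ} (hr : r ∈ Set.Ioo (-1:ℝ) 1) (x : ℝ) :
    HasDerivAt (fun r => gint v r x) (gint' v r x) r := by
  have hθ := hasDerivAt_thf (v := v) hr x
  have hQ : HasDerivAt (fun r => Qt (thf v r x))
      (-(gphi (thf v r x)) * ((r * v - x) / Real.sqrt (1 - r ^ 2) ^ 3)) r :=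
    (hasDerivAt_Qt _).comp r hθ
  have := hQ.const_mul (gphi x)
  refine this.congr_deriv ?_
  unfold gint'
  ring
lemma gint'_eq {v r : ℝ} (hr : r ∈ Set.Ioo (-1:ℝ) 1) (x : ℝ) :
    gint' v r x = (2 * Real.pi)⁻¹ * Real.exp (-v ^ 2 / 2) *
      ((x - r * v) * Real.exp (-(x - r * v) ^ 2 / (2 * (1 - r ^ 2))) /
        Real.sqrt (1 - r ^ 2) ^ 3) := by
  obtain ⟨hr1, hr2⟩ := hr
  have h1r : (0:ℝ) < 1 - r ^ 2 := by nlinarith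
  have hc2 : Real.sqrt (1 - r ^ 2) ^ 2 = 1 - r ^ 2 := Real.sq_sqrt h1r.le
  have hθsq : thf v r x ^ 2 = (v - r * x) ^ 2 / (1 - r ^ 2) := by
    rw [thf, div_pow, hc2]
  have h2π : (0:ℝ) ≤ 2 * Real.pi := by positivity
  unfold gint' gphi
  rw [hθsq]
  rw [show ((Real.sqrt (2 * Real.pi))⁻¹ * Real.exp (-x ^ 2 / 2)) *
      ((Real.sqrt (2 * Real.pi))⁻¹ * Real.exp (-((v - r * x) ^ 2 / (1 - r ^ 2)) / 2)) =
      (Real.sqrt (2 * Real.pi) * Real.sqrt (2 * Real.pi))⁻¹ *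
        Real.exp (-x ^ 2 / 2 + -((v - r * x) ^ 2 / (1 - r ^ 2)) / 2) by
    rw [Real.exp_add, mul_inv]; ring]
  rw [Real.mul_self_sqrt h2π]
  rw [show -x ^ 2 / 2 + -((v - r * x) ^ 2 / (1 - r ^ 2)) / 2 =
      -v ^ 2 / 2 + -(x - r * v) ^ 2 / (2 * (1 - r ^ 2)) by
    field_simp; ring]
  rw [Real.exp_add]
  ring

lemma antideriv_aux {r : ℝ} (h1r : (0:ℝ) < 1 - r ^ 2) (b : ℝ) (x : ℝ) :
    HasDerivAt (fun x => -(1 - r ^ 2) * Real.exp (-(x - b) ^ 2 / (2 * (1 - r ^ 2))))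
      ((x - b) * Real.exp (-(x - b) ^ 2 / (2 * (1 - r ^ 2)))) x := by
  have hu : HasDerivAt (fun x : ℝ => -(x - b) ^ 2 / (2 * (1 - r ^ 2)))
      (-(2 * (x - b) ^ 1 * 1) / (2 * (1 - r ^ 2))) x :=
    (((hasDerivAt_id x).sub_const b).pow 2).neg.div_const _
  have := (hu.exp).const_mul (-(1 - r ^ 2))
  refine this.congr_deriv ?_
  field_simp

lemma integrable_deriv_aux {r : ℝ} (h1r : (0:ℝ) < 1 - r ^ 2) (b : ℝ) :
    Integrable (fun x => (x - b) * Real.exp (-(x - b) ^ 2 / (2 * (1 - r ^ 2)))) := by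
  have hk : (0:ℝ) < (2 * (1 - r ^ 2))⁻¹ := by positivity
  have h := (integrable_mul_exp_neg_mul_sq hk).comp_sub_right b
  refine h.congr (Filter.Eventually.of_forall fun x => ?_)
  simp only []
  congr 1
  rw [neg_div, div_eq_mul_inv, mul_comm ((x - b) ^ 2) _, neg_mul]

lemma tendsto_antideriv {r : ℝ} (h1r : (0:ℝ) < 1 - r ^ 2) (b : ℝ) {l : Filter ℝ}
    (h : Filter.Tendsto (fun x : ℝ => (x - b) ^ 2) l Filter.atTop) :
    Filter.Tendsto (fun x => -(1 - r ^ 2) * Real.exp (-(x - b) ^ 2 / (2 * (1 - r ^ 2))))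
      l (nhds 0) := by
  have h2 : Filter.Tendsto (fun x : ℝ => -(x - b) ^ 2 / (2 * (1 - r ^ 2))) l Filter.atBot := by
    apply Filter.Tendsto.atBot_div_const (by positivity)
    exact (tendsto_neg_atTop_atBot).comp h
  have h3 := Real.tendsto_exp_atBot.comp h2
  have h4 := h3.const_mul (-(1 - r ^ 2))
  simpa using h4

lemma tendsto_sq_top (b : ℝ) :
    Filter.Tendsto (fun x : ℝ => (x - b) ^ 2) Filter.atTop Filter.atTop := by
  apply (tendsto_pow_atTop two_ne_zero).comp
  simpa [sub_eq_add_neg] using Filter.tendsto_atTop_add_const_right Filter.atTop (-b)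
    (Filter.tendsto_id (α := ℝ))

lemma tendsto_sq_bot (b : ℝ) :
    Filter.Tendsto (fun x : ℝ => (x - b) ^ 2) Filter.atBot Filter.atTop := by
  have h0 : Filter.Tendsto (fun x : ℝ => x - b) Filter.atBot Filter.atBot := by
    simpa [sub_eq_add_neg] using Filter.tendsto_atBot_add_const_right Filter.atBot (-b)
      (Filter.tendsto_id (α := ℝ))
  have h1 := (tendsto_pow_atTop two_ne_zero).comp (tendsto_abs_atBot_atTop.comp h0)
  refine h1.congr fun x => ?_
  simp [sq_abs]

lemma integral_Ioi_raw {r : ℝ} (h1r : (0:ℝ) < 1 - r ^ 2) (b v : ℝ) :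
    ∫ x in Set.Ioi v, (x - b) * Real.exp (-(x - b) ^ 2 / (2 * (1 - r ^ 2)))
      = (1 - r ^ 2) * Real.exp (-(v - b) ^ 2 / (2 * (1 - r ^ 2))) := by
  have h := MeasureTheory.integral_Ioi_of_hasDerivAt_of_tendsto
    (f := fun x => -(1 - r ^ 2) * Real.exp (-(x - b) ^ 2 / (2 * (1 - r ^ 2))))
    (f' := fun x => (x - b) * Real.exp (-(x - b) ^ 2 / (2 * (1 - r ^ 2))))
    (a := v) (m := 0)
    ((antideriv_aux h1r b v).continuousAt.continuousWithinAt)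
    (fun x _ => antideriv_aux h1r b x)
    ((integrable_deriv_aux h1r b).integrableOn)
    (tendsto_antideriv h1r b (tendsto_sq_top b))
  rw [h]; ring

lemma integral_univ_raw {r : ℝ} (h1r : (0:ℝ) < 1 - r ^ 2) (b : ℝ) :
    ∫ x, (x - b) * Real.exp (-(x - b) ^ 2 / (2 * (1 - r ^ 2))) = 0 := by
  have hIic := MeasureTheory.integral_Iic_of_hasDerivAt_of_tendsto
    (f := fun x => -(1 - r ^ 2) * Real.exp (-(x - b) ^ 2 / (2 * (1 - r ^ 2))))
    (f' := fun x => (x - b) * Real.exp (-(x - b) ^ 2 / (2 * (1 - r ^ 2))))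
    (a := b) (m := 0)
    ((antideriv_aux h1r b b).continuousAt.continuousWithinAt)
    (fun x _ => antideriv_aux h1r b x)
    ((integrable_deriv_aux h1r b).integrableOn)
    (tendsto_antideriv h1r b (tendsto_sq_bot b))
  have hIoi := integral_Ioi_raw h1r b b
  rw [← intervalIntegral.integral_Iic_add_Ioi
    ((integrable_deriv_aux h1r b).integrableOn) ((integrable_deriv_aux h1r b).integrableOn),
    hIic, hIoi]
  simp

lemma integral_Ioi_gint' {r : ℝ} (hr : r ∈ Set.Ioo (-1:ℝ) 1) (v : ℝ) :
    ∫ x in Set.Ioi v, gint' v r x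
      = (2 * Real.pi)⁻¹ * (Real.sqrt (1 - r ^ 2))⁻¹ * Real.exp (-v ^ 2 / (1 + r)) := by
  obtain ⟨hr1, hr2⟩ := hr
  have h1r : (0:ℝ) < 1 - r ^ 2 := by nlinarith
  have h1rne : (1:ℝ) - r ^ 2 ≠ 0 := h1r.ne'
  have h1pne : (1:ℝ) + r ≠ 0 := by intro h; nlinarith
  have hc : 0 < Real.sqrt (1 - r ^ 2) := Real.sqrt_pos.2 h1r
  have hc2 : Real.sqrt (1 - r ^ 2) ^ 2 = 1 - r ^ 2 := Real.sq_sqrt h1r.le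
  have hrw : ∀ x : ℝ, gint' v r x =
      ((2 * Real.pi)⁻¹ * Real.exp (-v ^ 2 / 2) / Real.sqrt (1 - r ^ 2) ^ 3) *
        ((x - r * v) * Real.exp (-(x - r * v) ^ 2 / (2 * (1 - r ^ 2)))) := fun x => by
    rw [gint'_eq ⟨hr1, hr2⟩ x]; ring
  simp_rw [hrw]
  rw [MeasureTheory.integral_const_mul, integral_Ioi_raw h1r (r * v) v]
  have hE : Real.exp (-v ^ 2 / 2) * Real.exp (-(v - r * v) ^ 2 / (2 * (1 - r ^ 2)))
      = Real.exp (-v ^ 2 / (1 + r)) := by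
    rw [← Real.exp_add]; congr 1; field_simp; ring
  have h3 : Real.sqrt (1 - r ^ 2) ^ 3 = (1 - r ^ 2) * Real.sqrt (1 - r ^ 2) := by
    rw [pow_succ, hc2]
  rw [show (2 * Real.pi)⁻¹ * Real.exp (-v ^ 2 / 2) / Real.sqrt (1 - r ^ 2) ^ 3 *
        ((1 - r ^ 2) * Real.exp (-(v - r * v) ^ 2 / (2 * (1 - r ^ 2)))) =
      (2 * Real.pi)⁻¹ * ((1 - r ^ 2) / Real.sqrt (1 - r ^ 2) ^ 3) *
        (Real.exp (-v ^ 2 / 2) * Real.exp (-(v - r * v) ^ 2 / (2 * (1 - r ^ 2)))) from by ring]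
  rw [hE, show (1 - r ^ 2) / Real.sqrt (1 - r ^ 2) ^ 3 = (Real.sqrt (1 - r ^ 2))⁻¹ from by
    rw [h3]; field_simp]

lemma integral_univ_gint' {r : ℝ} (hr : r ∈ Set.Ioo (-1:ℝ) 1) (v : ℝ) :
    ∫ x, gint' v r x = 0 := by
  obtain ⟨hr1, hr2⟩ := hr
  have h1r : (0:ℝ) < 1 - r ^ 2 := by nlinarith
  have hrw : ∀ x : ℝ, gint' v r x =
      ((2 * Real.pi)⁻¹ * Real.exp (-v ^ 2 / 2) / Real.sqrt (1 - r ^ 2) ^ 3) *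
        ((x - r * v) * Real.exp (-(x - r * v) ^ 2 / (2 * (1 - r ^ 2)))) := fun x => by
    rw [gint'_eq ⟨hr1, hr2⟩ x]; ring
  simp_rw [hrw]
  rw [MeasureTheory.integral_const_mul, integral_univ_raw h1r (r * v), mul_zero]
lemma continuous_gint (v r : ℝ) : Continuous (gint v r) := by
  unfold gint thf
  exact continuous_gphi.mul (continuous_Qt.comp
    ((continuous_const.sub (continuous_const.mul continuous_id)).div_const _))

lemma continuous_gint' (v r : ℝ) : Continuous (gint' v r) := by
  unfold gint' thf
  refine (continuous_gphi.mul (continuous_gphi.comp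
    ((continuous_const.sub (continuous_const.mul continuous_id)).div_const _))).mul ?_
  exact (continuous_id.sub continuous_const).div_const _

lemma integrable_abs_mul_gphi : Integrable (fun x => |x| * gphi x) := by
  have h := (integrable_mul_exp_neg_mul_sq (show (0:ℝ) < 1/2 by norm_num)).abs
  have h2 := h.const_mul ((Real.sqrt (2 * Real.pi))⁻¹)
  refine h2.congr (Filter.Eventually.of_forall fun x => ?_)
  simp only []
  rw [abs_mul, abs_of_pos (Real.exp_pos _)]
  unfold gphi
  rw [show -(1/2 : ℝ) * x ^ 2 = -x ^ 2 / 2 by ring]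
  ring

lemma integrable_gint {v r : ℝ} (s : Set ℝ) : Integrable (gint v r) (volume.restrict s) := by
  refine Integrable.mono (integrable_gphi.restrict)
    (continuous_gint v r).aestronglyMeasurable.restrict
    (Filter.Eventually.of_forall fun x => ?_)
  rw [Real.norm_eq_abs, Real.norm_eq_abs, gint,
    abs_of_nonneg (mul_nonneg (gphi_nonneg x) (Qt_nonneg _)), abs_of_nonneg (gphi_nonneg x)]
  calc gphi x * Qt (thf v r x) ≤ gphi x * 1 :=
        mul_le_mul_of_nonneg_left (Qt_le_one _) (gphi_nonneg x)
    _ = gphi x := mul_one _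

lemma hasDerivAt_integral_gint (v : ℝ) (s : Set ℝ) {r₀ : ℝ} (hr₀ : r₀ ∈ Set.Ioo (-1:ℝ) 1) :
    HasDerivAt (fun r => ∫ x, gint v r x ∂(volume.restrict s))
      (∫ x, gint' v r₀ x ∂(volume.restrict s)) r₀ := by
  obtain ⟨h1, h2⟩ := hr₀
  set ε : ℝ := min (1 - r₀) (r₀ + 1) / 2 with hε
  have hε_pos : 0 < ε := by
    apply div_pos _ two_pos
    apply lt_min <;> linarith
  have hball : ∀ r ∈ ball r₀ ε, ε < 1 - r ∧ ε < 1 + r := by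
    intro r hr
    rw [mem_ball, Real.dist_eq] at hr
    have h3 := abs_lt.1 hr
    have h4 := min_le_left (1 - r₀) (r₀ + 1)
    have h5 := min_le_right (1 - r₀) (r₀ + 1)
    constructor <;> linarith [h3.1, h3.2]
  have hball_sub : ∀ r ∈ ball r₀ ε, r ∈ Set.Ioo (-1:ℝ) 1 := by
    intro r hr
    have h := hball r hr
    exact ⟨by linarith [h.2], by linarith [h.1]⟩
  have hcbound : ∀ r ∈ ball r₀ ε, ε ^ 3 ≤ Real.sqrt (1 - r ^ 2) ^ 3 := by
    intro r hr
    have h := hball r hr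
    have hsq : ε ^ 2 ≤ 1 - r ^ 2 := by nlinarith [h.1, h.2, hε_pos]
    have hle : ε ≤ Real.sqrt (1 - r ^ 2) := by
      rw [show ε = Real.sqrt (ε ^ 2) from (Real.sqrt_sq hε_pos.le).symm]
      exact Real.sqrt_le_sqrt hsq
    exact pow_le_pow_left₀ hε_pos.le hle 3
  set bd : ℝ → ℝ := fun x => (Real.sqrt (2 * Real.pi))⁻¹ / ε ^ 3 * (|x| * gphi x)
    + (Real.sqrt (2 * Real.pi))⁻¹ * |v| / ε ^ 3 * gphi x with hbd
  have hbd_int : Integrable bd (volume.restrict s) :=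
    ((integrable_abs_mul_gphi.const_mul _).add (integrable_gphi.const_mul _)).restrict
  have h_bound : ∀ x : ℝ, ∀ r ∈ ball r₀ ε, ‖gint' v r x‖ ≤ bd x := by
    intro x r hr
    have hIoo := hball_sub r hr
    have h1r : (0:ℝ) < 1 - r ^ 2 := by nlinarith [hIoo.1, hIoo.2]
    have hc3 := hcbound r hr
    have hc3pos : (0:ℝ) < ε ^ 3 := by positivity
    have hxa : |x - r * v| ≤ |x| + |v| := by
      have h6 : |x - r * v| ≤ |x| + |r * v| := abs_sub _ _
      have h7 : |r * v| ≤ |v| := by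
        rw [abs_mul]
        have : |r| ≤ 1 := by
          rw [abs_le]; exact ⟨hIoo.1.le, hIoo.2.le⟩
        nlinarith [abs_nonneg v]
      linarith
    rw [Real.norm_eq_abs, gint', abs_mul, abs_mul, abs_of_nonneg (gphi_nonneg x),
      abs_of_nonneg (gphi_nonneg _), abs_div,
      abs_of_nonneg (pow_nonneg (Real.sqrt_nonneg _) 3)]
    calc gphi x * gphi (thf v r x) * (|x - r * v| / Real.sqrt (1 - r ^ 2) ^ 3)
        ≤ gphi x * (Real.sqrt (2 * Real.pi))⁻¹ * ((|x| + |v|) / ε ^ 3) := by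
          gcongr gphi x * ?_ * (?_ / ?_) <;>
            first
            | exact mul_nonneg (gphi_nonneg x) (by positivity)
            | exact gphi_le _
            | exact hxa
            | exact hc3
            | exact gphi_nonneg x
            | positivity
      _ = bd x := by rw [hbd]; ring
  have key := hasDerivAt_integral_of_dominated_loc_of_deriv_le (ball_mem_nhds r₀ hε_pos)
    (Filter.Eventually.of_forall fun r => (continuous_gint v r).aestronglyMeasurable.restrict)
    (integrable_gint s)
    ((continuous_gint' v r₀).aestronglyMeasurable.restrict)
    (Filter.Eventually.of_forall fun x r hr => h_bound x r hr)
    hbd_int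
    (Filter.Eventually.of_forall fun x r hr => hasDerivAt_gint (hball_sub r hr) x)
  exact key.2
lemma uIcc_sub_Ioo {ρ : ℝ} (hρ : ρ ∈ Set.Ioo (-1:ℝ) 1) :
    Set.uIcc (0:ℝ) ρ ⊆ Set.Ioo (-1:ℝ) 1 := by
  intro s hs
  rw [Set.mem_uIcc] at hs
  obtain ⟨h1, h2⟩ := hρ
  rcases hs with ⟨ha, hb⟩ | ⟨ha, hb⟩ <;> exact ⟨by linarith, by linarith⟩

lemma rhs_integrand_intervalIntegrable (v : ℝ) {ρ : ℝ} (hρ : ρ ∈ Set.Ioo (-1:ℝ) 1) :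
    IntervalIntegrable
      (fun s => (2 * Real.pi)⁻¹ * (Real.sqrt (1 - s ^ 2))⁻¹ * Real.exp (-v ^ 2 / (1 + s)))
      volume 0 ρ := by
  apply ContinuousOn.intervalIntegrable
  have hsub := uIcc_sub_Ioo hρ
  have hpos : ∀ s ∈ Set.uIcc (0:ℝ) ρ, (0:ℝ) < 1 - s ^ 2 := by
    intro s hs
    obtain ⟨ha, hb⟩ := hsub hs
    nlinarith
  have c1 : ContinuousOn (fun s : ℝ => Real.sqrt (1 - s ^ 2)) (Set.uIcc (0:ℝ) ρ) :=
    (Real.continuous_sqrt.comp (continuous_const.sub (continuous_pow 2))).continuousOn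
  refine (continuousOn_const.mul (c1.inv₀ fun s hs =>
    (Real.sqrt_pos.2 (hpos s hs)).ne')).mul ?_
  refine Real.continuous_exp.comp_continuousOn ?_
  refine continuousOn_const.div (continuous_const.add continuous_id).continuousOn ?_
  intro s hs
  obtain ⟨ha, _⟩ := hsub hs
  intro h; rw [show s = -1 by linarith] at ha; exact lt_irrefl _ ha

lemma key_Ioi (v : ℝ) {ρ : ℝ} (hρ : ρ ∈ Set.Ioo (-1:ℝ) 1) :
    (∫ x in Set.Ioi v, gint v ρ x) - (∫ x in Set.Ioi v, gint v 0 x)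
      = ∫ s in (0:ℝ)..ρ,
          (2 * Real.pi)⁻¹ * (Real.sqrt (1 - s ^ 2))⁻¹ * Real.exp (-v ^ 2 / (1 + s)) := by
  have hsub := uIcc_sub_Ioo hρ
  have h := intervalIntegral.integral_eq_sub_of_hasDerivAt
    (f := fun r => ∫ x in Set.Ioi v, gint v r x)
    (f' := fun s => (2 * Real.pi)⁻¹ * (Real.sqrt (1 - s ^ 2))⁻¹ * Real.exp (-v ^ 2 / (1 + s)))
    (fun t ht => by
      have hd := hasDerivAt_integral_gint v (Set.Ioi v) (hsub ht)
      rwa [show (∫ x, gint' v t x ∂(volume.restrict (Set.Ioi v)))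
          = (2 * Real.pi)⁻¹ * (Real.sqrt (1 - t ^ 2))⁻¹ * Real.exp (-v ^ 2 / (1 + t)) from
        integral_Ioi_gint' (hsub ht) v] at hd)
    (rhs_integrand_intervalIntegrable v hρ)
  rw [h]

lemma key_univ (v : ℝ) {ρ : ℝ} (hρ : ρ ∈ Set.Ioo (-1:ℝ) 1) :
    (∫ x, gint v ρ x) = ∫ x, gint v 0 x := by
  have hsub := uIcc_sub_Ioo hρ
  have h := intervalIntegral.integral_eq_sub_of_hasDerivAt
    (f := fun r => ∫ x, gint v r x ∂(volume.restrict Set.univ))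
    (f' := fun _ => (0:ℝ))
    (fun t ht => by
      have hd := hasDerivAt_integral_gint v Set.univ (hsub ht)
      rwa [show (∫ x, gint' v t x ∂(volume.restrict Set.univ)) = 0 from by
        rw [Measure.restrict_univ]; exact integral_univ_gint' (hsub ht) v] at hd)
    (intervalIntegrable_const)
  simp only [Measure.restrict_univ] at h
  have h0 : (∫ s in (0:ℝ)..ρ, (0:ℝ)) = 0 := by simp
  rw [h0] at h
  linarith [h]

lemma thf_zero (v x : ℝ) : thf v 0 x = v := by
  simp [thf]

lemma gint_zero (v x : ℝ) : gint v 0 x = gphi x * Qt v := by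
  rw [gint, thf_zero]

lemma integral_Ioi_gint_zero (v : ℝ) : ∫ x in Set.Ioi v, gint v 0 x = Qt v * Qt v := by
  simp_rw [gint_zero]
  rw [MeasureTheory.integral_mul_const]
  rfl

lemma integral_univ_gint_zero (v : ℝ) : ∫ x, gint v 0 x = Qt v := by
  simp_rw [gint_zero]
  rw [MeasureTheory.integral_mul_const, integral_gphi, one_mul]
lemma gint_nonneg (v r x : ℝ) : 0 ≤ gint v r x :=
  mul_nonneg (gphi_nonneg x) (Qt_nonneg _)

lemma gaussian_Ici (t : ℝ) : gaussianReal 0 1 (Set.Ici t) = ENNReal.ofReal (Qt t) := by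
  rw [gaussianReal_of_var_ne_zero 0 one_ne_zero, withDensity_apply _ measurableSet_Ici,
    ← Measure.restrict_congr_set Ioi_ae_eq_Ici]
  have hpdf : ∀ x : ℝ, gaussianPDF 0 1 x = ENNReal.ofReal (gphi x) := fun x => by
    rw [gaussianPDF, gphi_eq]
  simp_rw [hpdf]
  rw [← ofReal_integral_eq_lintegral_ofReal integrable_gphi.restrict
    (Filter.Eventually.of_forall gphi_nonneg)]
  rfl

lemma gaussian_prod_eval (v : ℝ) {ρ : ℝ} (hρ : ρ ∈ Set.Ioo (-1:ℝ) 1) :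
    ((gaussianReal 0 1).prod (gaussianReal 0 1))
        {p : ℝ × ℝ | v ≤ p.1 ∧ v ≤ ρ * p.1 + Real.sqrt (1 - ρ ^ 2) * p.2}
      = ENNReal.ofReal (∫ x in Set.Ioi v, gint v ρ x) := by
  obtain ⟨h1, h2⟩ := hρ
  have h1r : (0:ℝ) < 1 - ρ ^ 2 := by nlinarith
  have hc : 0 < Real.sqrt (1 - ρ ^ 2) := Real.sqrt_pos.2 h1r
  set S : Set (ℝ × ℝ) := {p : ℝ × ℝ | v ≤ p.1 ∧ v ≤ ρ * p.1 + Real.sqrt (1 - ρ ^ 2) * p.2}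
    with hS
  have hSm : MeasurableSet S := by
    apply MeasurableSet.inter
    · exact measurableSet_le measurable_const measurable_fst
    · exact measurableSet_le measurable_const
        ((measurable_fst.const_mul ρ).add (measurable_snd.const_mul _))
  rw [Measure.prod_apply hSm]
  have hsec : ∀ x : ℝ,
      (gaussianReal 0 1) (Prod.mk x ⁻¹' S)
        = Set.indicator (Set.Ici v) (fun x => ENNReal.ofReal (Qt (thf v ρ x))) x := by
    intro x
    by_cases hx : v ≤ x
    · have hset : Prod.mk x ⁻¹' S = Set.Ici (thf v ρ x) := by
        ext z
        simp only [S, Set.mem_preimage, Set.mem_setOf_eq, Set.mem_Ici, hx, true_and]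
        rw [thf, div_le_iff₀ hc]
        constructor <;> intro h <;> nlinarith [h]
      rw [hset, gaussian_Ici, Set.indicator_of_mem (Set.mem_Ici.2 hx)]
    · have hset : Prod.mk x ⁻¹' S = ∅ := by
        ext z
        simp only [S, Set.mem_preimage, Set.mem_setOf_eq, Set.mem_empty_iff_false, iff_false]
        intro h; exact hx h.1
      rw [hset, measure_empty, Set.indicator_of_notMem (fun h => hx (Set.mem_Ici.1 h))]
  simp_rw [hsec]
  rw [lintegral_indicator measurableSet_Ici]
  have hQc : Continuous fun x : ℝ => Qt (thf v ρ x) := by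
    unfold thf
    exact continuous_Qt.comp
      ((continuous_const.sub (continuous_const.mul continuous_id)).div_const _)
  have hQm : Measurable fun x : ℝ => ENNReal.ofReal (Qt (thf v ρ x)) :=
    hQc.measurable.ennreal_ofReal
  rw [gaussianReal_of_var_ne_zero 0 one_ne_zero,
    restrict_withDensity measurableSet_Ici,
    lintegral_withDensity_eq_lintegral_mul _ (measurable_gaussianPDF 0 1) hQm]
  simp only [Pi.mul_apply]
  have hptwise : ∀ x : ℝ,
      gaussianPDF 0 1 x * ENNReal.ofReal (Qt (thf v ρ x)) = ENNReal.ofReal (gint v ρ x) := by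
    intro x
    rw [gaussianPDF, gphi_eq, ← ENNReal.ofReal_mul (gphi_nonneg x)]
    rfl
  simp_rw [hptwise]
  rw [← Measure.restrict_congr_set Ioi_ae_eq_Ici,
    ← ofReal_integral_eq_lintegral_ofReal (integrable_gint (Set.Ioi v))
      (Filter.Eventually.of_forall fun x => gint_nonneg v ρ x)]

lemma gaussian_prod_eval2 (v : ℝ) {ρ : ℝ} (hρ : ρ ∈ Set.Ioo (-1:ℝ) 1) :
    ((gaussianReal 0 1).prod (gaussianReal 0 1))
        {p : ℝ × ℝ | v ≤ ρ * p.1 + Real.sqrt (1 - ρ ^ 2) * p.2}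
      = ENNReal.ofReal (∫ x, gint v ρ x) := by
  obtain ⟨h1, h2⟩ := hρ
  have h1r : (0:ℝ) < 1 - ρ ^ 2 := by nlinarith
  have hc : 0 < Real.sqrt (1 - ρ ^ 2) := Real.sqrt_pos.2 h1r
  set S : Set (ℝ × ℝ) := {p : ℝ × ℝ | v ≤ ρ * p.1 + Real.sqrt (1 - ρ ^ 2) * p.2} with hS
  have hSm : MeasurableSet S :=
    measurableSet_le measurable_const
      ((measurable_fst.const_mul ρ).add (measurable_snd.const_mul _))
  rw [Measure.prod_apply hSm]
  have hsec : ∀ x : ℝ,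
      (gaussianReal 0 1) (Prod.mk x ⁻¹' S) = ENNReal.ofReal (Qt (thf v ρ x)) := by
    intro x
    have hset : Prod.mk x ⁻¹' S = Set.Ici (thf v ρ x) := by
      ext z
      simp only [S, Set.mem_preimage, Set.mem_setOf_eq, Set.mem_Ici]
      rw [thf, div_le_iff₀ hc]
      constructor <;> intro h <;> nlinarith [h]
    rw [hset, gaussian_Ici]
  simp_rw [hsec]
  have hQc : Continuous fun x : ℝ => Qt (thf v ρ x) := by
    unfold thf
    exact continuous_Qt.comp
      ((continuous_const.sub (continuous_const.mul continuous_id)).div_const _)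
  have hQm : Measurable fun x : ℝ => ENNReal.ofReal (Qt (thf v ρ x)) :=
    hQc.measurable.ennreal_ofReal
  rw [gaussianReal_of_var_ne_zero 0 one_ne_zero,
    lintegral_withDensity_eq_lintegral_mul _ (measurable_gaussianPDF 0 1) hQm]
  simp only [Pi.mul_apply]
  have hptwise : ∀ x : ℝ,
      gaussianPDF 0 1 x * ENNReal.ofReal (Qt (thf v ρ x)) = ENNReal.ofReal (gint v ρ x) := by
    intro x
    rw [gaussianPDF, gphi_eq, ← ENNReal.ofReal_mul (gphi_nonneg x)]
    rfl
  simp_rw [hptwise]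
  have hint : Integrable (gint v ρ) := by
    have h := integrable_gint (v := v) (r := ρ) Set.univ
    rwa [Measure.restrict_univ] at h
  rw [← ofReal_integral_eq_lintegral_ofReal hint
    (Filter.Eventually.of_forall fun x => gint_nonneg v ρ x)]

end PlackettAux

/-- for a bivariate Gaussian vector with means `a`, variances `τ²` and
correlation `ρ ∈ (−1,1)` — realized as `X = a + τX₀`, `Y = a + τ(ρX₀ + √(1−ρ²)Z)` with
`X₀, Z` independent standard Gaussians — one has, for every level `u`,
`cov(1{X ≥ u}, 1{Y ≥ u}) = (1/(2π)) ∫_0^ρ (1−s²)^{−1/2} exp(−(u−a)²/(τ²(1+s))) ds`. -/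
theorem gaussian_indicator_cov_formula
    {Ω : Type*} [MeasurableSpace Ω] (P : Measure Ω) [IsProbabilityMeasure P]
    (X₀ Z : Ω → ℝ) (hX₀m : Measurable X₀) (hZm : Measurable Z)
    (hX₀ : Measure.map X₀ P = gaussianReal 0 1) (hZ : Measure.map Z P = gaussianReal 0 1)
    (hind : IndepFun X₀ Z P) (ρ : ℝ) (hρ : ρ ∈ Set.Ioo (-1 : ℝ) 1)
    (a τ : ℝ) (hτ : 0 < τ) (X Y : Ω → ℝ)
    (hX : X = fun ω => a + τ * X₀ ω)
    (hY : Y = fun ω => a + τ * (ρ * X₀ ω + Real.sqrt (1 - ρ ^ 2) * Z ω))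
    (u : ℝ) :
    (P {ω | u ≤ X ω ∧ u ≤ Y ω}).toReal
        - (P {ω | u ≤ X ω}).toReal * (P {ω | u ≤ Y ω}).toReal
      = (1 / (2 * Real.pi)) *
          ∫ s in (0 : ℝ)..ρ,
            (1 - s ^ 2) ^ (-(1 : ℝ) / 2) * Real.exp (-(u - a) ^ 2 / (τ ^ 2 * (1 + s))) := by
  obtain ⟨hρ1, hρ2⟩ := hρ
  have hρ' : ρ ∈ Set.Ioo (-1:ℝ) 1 := ⟨hρ1, hρ2⟩
  set v : ℝ := (u - a) / τ with hv
  have hiff : ∀ w : ℝ, (u ≤ a + τ * w) ↔ (v ≤ w) := fun w => by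
    rw [hv, div_le_iff₀ hτ, mul_comm]
    constructor <;> intro h <;> linarith
  have hpair : Measurable fun ω => (X₀ ω, Z ω) := hX₀m.prodMk hZm
  have hmap : Measure.map (fun ω => (X₀ ω, Z ω)) P
      = (gaussianReal 0 1).prod (gaussianReal 0 1) := by
    have h := (indepFun_iff_map_prod_eq_prod_map_map hX₀m.aemeasurable hZm.aemeasurable).mp hind
    rwa [hX₀, hZ] at h
  -- the joint probability
  set S : Set (ℝ × ℝ) := {p : ℝ × ℝ | v ≤ p.1 ∧ v ≤ ρ * p.1 + Real.sqrt (1 - ρ ^ 2) * p.2}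
    with hS
  have hSm : MeasurableSet S := by
    apply MeasurableSet.inter
    · exact measurableSet_le measurable_const measurable_fst
    · exact measurableSet_le measurable_const
        ((measurable_fst.const_mul ρ).add (measurable_snd.const_mul _))
  have hsetJ : {ω | u ≤ X ω ∧ u ≤ Y ω} = (fun ω => (X₀ ω, Z ω)) ⁻¹' S := by
    ext ω
    simp only [hX, hY, Set.mem_setOf_eq, Set.mem_preimage, hS]
    rw [hiff, hiff]
  have hPJ : P {ω | u ≤ X ω ∧ u ≤ Y ω} = ENNReal.ofReal (∫ x in Set.Ioi v, gint v ρ x) := by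
    rw [hsetJ, ← Measure.map_apply hpair hSm, hmap]
    exact gaussian_prod_eval v hρ'
  -- the X probability
  have hsetX : {ω | u ≤ X ω} = X₀ ⁻¹' Set.Ici v := by
    ext ω
    simp only [hX, Set.mem_setOf_eq, Set.mem_preimage, Set.mem_Ici]
    exact hiff (X₀ ω)
  have hPX : P {ω | u ≤ X ω} = ENNReal.ofReal (Qt v) := by
    rw [hsetX, ← Measure.map_apply hX₀m measurableSet_Ici, hX₀, gaussian_Ici]
  -- the Y probability
  set S2 : Set (ℝ × ℝ) := {p : ℝ × ℝ | v ≤ ρ * p.1 + Real.sqrt (1 - ρ ^ 2) * p.2} with hS2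
  have hS2m : MeasurableSet S2 :=
    measurableSet_le measurable_const
      ((measurable_fst.const_mul ρ).add (measurable_snd.const_mul _))
  have hsetY : {ω | u ≤ Y ω} = (fun ω => (X₀ ω, Z ω)) ⁻¹' S2 := by
    ext ω
    simp only [hY, Set.mem_setOf_eq, Set.mem_preimage, hS2]
    exact hiff _
  have hPY : P {ω | u ≤ Y ω} = ENNReal.ofReal (Qt v) := by
    rw [hsetY, ← Measure.map_apply hpair hS2m, hmap, gaussian_prod_eval2 v hρ',
      key_univ v hρ', integral_univ_gint_zero]
  -- put together
  have hJnn : 0 ≤ ∫ x in Set.Ioi v, gint v ρ x :=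
    setIntegral_nonneg measurableSet_Ioi fun x _ => gint_nonneg v ρ x
  rw [hPJ, hPX, hPY, ENNReal.toReal_ofReal hJnn, ENNReal.toReal_ofReal (Qt_nonneg v)]
  rw [show Qt v * Qt v = ∫ x in Set.Ioi v, gint v 0 x from (integral_Ioi_gint_zero v).symm]
  rw [key_Ioi v hρ']
  rw [show (1 / (2 * Real.pi)) *
      (∫ s in (0:ℝ)..ρ, (1 - s ^ 2) ^ (-(1 : ℝ) / 2) *
        Real.exp (-(u - a) ^ 2 / (τ ^ 2 * (1 + s))))
    = ∫ s in (0:ℝ)..ρ, (1 / (2 * Real.pi)) * ((1 - s ^ 2) ^ (-(1 : ℝ) / 2) *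
        Real.exp (-(u - a) ^ 2 / (τ ^ 2 * (1 + s)))) from
    (intervalIntegral.integral_const_mul _ _).symm]
  apply intervalIntegral.integral_congr
  intro s hs
  obtain ⟨hs1, hs2⟩ := uIcc_sub_Ioo hρ' hs
  have h1s : (0:ℝ) < 1 - s ^ 2 := by nlinarith
  have h1p : (0:ℝ) < 1 + s := by linarith
  simp only []
  rw [show ((1:ℝ) - s ^ 2) ^ (-(1 : ℝ) / 2) = (Real.sqrt (1 - s ^ 2))⁻¹ by
    rw [neg_div, Real.rpow_neg h1s.le, Real.sqrt_eq_rpow]]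
  rw [show -(u - a) ^ 2 / (τ ^ 2 * (1 + s)) = -v ^ 2 / (1 + s) by
    rw [hv, div_pow, neg_div, neg_div, div_div]]
  rw [one_div]
  ring
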